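/- Let G be a locally compact Hausdorff topological group whose center Z(G) is compact, and let (A,μ) be a partially crossed topological G-module with A compact Hausdorff. Then Inn(G,(A,μ)) = {((g ↦ a·(g•a)⁻¹), μ(a)·z) : a ∈ A, z ∈ Z(G)} is a compact, hence closed, subset of Der_c(G,(A,μ)) (with its subspace topology from C(G,A) × G). -/

import Mathlib

variable (G A : Type*)
  [Group G] [TopologicalSpace G] [IsTopologicalGroup G]
  [Group A] [TopologicalSpace A] [IsTopologicalGroup A]
  [MulDistribMulAction G A] [ContinuousSMul G A]

/-- `Der_c(G,(A,μ))` for a topological `G`-module `(A,μ)` (with `G` acting on itself by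
conjugation). -/
def derSetG (μ : A →* G) : Set (C(G, A) × G) :=
  {p | (∀ g h : G, p.1 (g * h) = p.1 g * g • p.1 h) ∧
    ∀ g : G, μ (p.1 g) = p.2 * g * p.2⁻¹ * g⁻¹}

/-- `Inn(G,(A,μ)) = {((g ↦ a * (g • a)⁻¹), μ a * z) : a ∈ A, z ∈ Z(G)}`. -/
def innSetG (μ : A →* G) : Set (C(G, A) × G) :=
  {p | ∃ a : A, ∃ z ∈ Subgroup.center G,
    (∀ g : G, p.1 g = a * (g • a)⁻¹) ∧ p.2 = μ a * z}

/-- Let `G` be a locally compact Hausdorff group whose center is compact and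
`(A,μ)` a partially crossed topological `G`-module with `A` compact Hausdorff. Then
`Inn(G,(A,μ))` is a compact, hence closed, subset of `Der_c(G,(A,μ))` (with its subspace
topology from `C(G,A) × G`). -/
theorem innSet_compact_closed_compact_center
    [LocallyCompactSpace G] [T2Space G] [CompactSpace A] [T2Space A]
    (hZ : IsCompact ((Subgroup.center G : Subgroup G) : Set G))
    (μ : A →* G) (hμc : Continuous μ)
    (hμG : ∀ (g : G) (a : A), μ (g • a) = g * μ a * g⁻¹)
    (hpart : ∀ a : A, μ a ∈ commutator G → ∀ b : A, μ a • b = a * b * a⁻¹) :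
    IsCompact (innSetG G A μ) ∧ innSetG G A μ ⊆ derSetG G A μ ∧
      IsClosed (Subtype.val ⁻¹' innSetG G A μ : Set (derSetG G A μ)) := by
  -- the joint map (a, g) ↦ a * (g • a)⁻¹
  set f : C(A × G, A) := ⟨fun p => p.1 * (p.2 • p.1)⁻¹, by
    exact continuous_fst.mul (continuous_snd.smul continuous_fst).inv⟩ with hf
  -- the parametrization map
  set F : A × G → C(G, A) × G :=
    fun q => (ContinuousMap.curry f q.1, μ q.1 * q.2) with hF
  have hFc : Continuous F := by
    refine Continuous.prodMk ?_ ?_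
    · exact (ContinuousMap.curry f).continuous.comp continuous_fst
    · exact (hμc.comp continuous_fst).mul continuous_snd
  have himg : innSetG G A μ = F '' (Set.univ ×ˢ ((Subgroup.center G : Subgroup G) : Set G)) := by
    ext p
    constructor
    · rintro ⟨a, z, hz, h1, h2⟩
      refine ⟨(a, z), ⟨Set.mem_univ _, hz⟩, ?_⟩
      simp only [hF]
      refine Prod.ext ?_ h2.symm
      ext g
      simp [ContinuousMap.curry, hf, h1 g]
    · rintro ⟨⟨a, z⟩, ⟨-, hz⟩, rfl⟩
      exact ⟨a, z, hz, fun g => rfl, rfl⟩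
  have hcompact : IsCompact (innSetG G A μ) := by
    rw [himg]
    exact (isCompact_univ.prod hZ).image hFc
  have hsub : innSetG G A μ ⊆ derSetG G A μ := by
    rintro p ⟨a, z, hz, h1, h2⟩
    constructor
    · intro g h
      simp only [h1, smul_mul', smul_inv', smul_smul]
      group
    · intro g
      have hzc : ∀ x : G, z * x = x * z := fun x =>
        (Subgroup.mem_center_iff.mp hz x).symm
      have key : μ a * z * g * (μ a * z)⁻¹ * g⁻¹ = μ a * g * (μ a)⁻¹ * g⁻¹ := by
        rw [mul_inv_rev, mul_assoc (μ a) z g, hzc g]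
        group
      rw [h1 g, map_mul, map_inv, hμG, h2, key]
      group
  refine ⟨hcompact, hsub, ?_⟩
  exact (hcompact.isClosed).preimage continuous_subtype_val
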